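/- Let (X, μ) be a metric probability space, ν ≪ μ with density f = dν/dμ, and suppose: (i) there exist ε, δ ∈ (0,1) such that for every Borel E ⊆ X, μ(E) < δ·μ(X) implies ν(E) < ε·ν(X); (ii) the mean oscillation of log f satisfies ⨍_X |log f − ⨍_X log f dμ| dμ < η. Then 1 ≤ (⨍_X f dμ) · exp(−⨍_X log f dμ) ≤ e^{η/δ} / (1 − ε). -/

import Mathlib

open MeasureTheory Filter Topology ENNReal

noncomputable section

/-- Quantitative absolute-continuity estimate: if small `μ`-proportion implies small
`ν`-proportion and `log f` has mean oscillation `< η`, then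
`1 ≤ (⨍ f dμ) exp(−⨍ log f dμ) ≤ e^{η/δ}/(1−ε)`. -/
theorem stmt15 {X : Type*} [MetricSpace X] [MeasurableSpace X] [BorelSpace X]
    (μ ν : Measure X) [IsProbabilityMeasure μ] [IsFiniteMeasure ν]
    (f : X → ℝ) (hfpos : ∀ᵐ x ∂μ, 0 < f x)
    (hdens : ν = μ.withDensity (fun x => ENNReal.ofReal (f x)))
    (hfint : Integrable f μ) (hlogint : Integrable (fun x => Real.log (f x)) μ)
    (ε δ : ℝ) (hε : ε ∈ Set.Ioo (0 : ℝ) 1) (hδ : δ ∈ Set.Ioo (0 : ℝ) 1)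
    (habs : ∀ E : Set X, MeasurableSet E → μ E < ENNReal.ofReal δ * μ Set.univ →
      ν E < ENNReal.ofReal ε * ν Set.univ)
    (η : ℝ)
    (hosc : ∫ x, |Real.log (f x) - ∫ y, Real.log (f y) ∂μ| ∂μ < η) :
    1 ≤ (∫ x, f x ∂μ) * Real.exp (-∫ x, Real.log (f x) ∂μ) ∧
      (∫ x, f x ∂μ) * Real.exp (-∫ x, Real.log (f x) ∂μ) ≤
        Real.exp (η / δ) / (1 - ε) := by
  obtain ⟨hε0, hε1⟩ := hε
  obtain ⟨hδ0, hδ1⟩ := hδ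
  set c : ℝ := ∫ x, Real.log (f x) ∂μ with hcdef
  set I : ℝ := ∫ x, f x ∂μ with hIdef
  have hInonneg : 0 ≤ I := integral_nonneg_of_ae (hfpos.mono fun x hx => hx.le)
  have hη : 0 < η := lt_of_le_of_lt (integral_nonneg fun x => abs_nonneg _) hosc
  have hηδ : 0 < η / δ := div_pos hη hδ0
  -- lower bound via log u ≤ u - 1
  have hlow : 1 ≤ I * Real.exp (-c) := by
    have hpt : ∀ᵐ x ∂μ, Real.log (f x) - c ≤ f x * Real.exp (-c) - 1 := by
      filter_upwards [hfpos] with x hx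
      have h := Real.log_le_sub_one_of_pos (mul_pos hx (Real.exp_pos (-c)))
      rwa [Real.log_mul hx.ne' (Real.exp_pos _).ne', Real.log_exp] at h
    have hint1 : Integrable (fun x => Real.log (f x) - c) μ :=
      hlogint.sub (integrable_const c)
    have hint2 : Integrable (fun x => f x * Real.exp (-c) - 1) μ :=
      (hfint.mul_const _).sub (integrable_const 1)
    have h := integral_mono_ae hint1 hint2 hpt
    rw [integral_sub hlogint (integrable_const c),
      integral_sub (hfint.mul_const _) (integrable_const 1),
      integral_mul_const, integral_const, integral_const, probReal_univ] at h
    simp only [ENNReal.toReal_one, one_smul, smul_eq_mul, one_mul] at h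
    linarith
  refine ⟨hlow, ?_⟩
  -- measurable modification of log f
  have hgsm := hlogint.aestronglyMeasurable
  set g' : X → ℝ := hgsm.mk _ with hg'def
  have hg'm : Measurable g' := hgsm.measurable_mk
  have hgg' : (fun x => Real.log (f x)) =ᵐ[μ] g' := hgsm.ae_eq_mk
  set E : Set X := {x | η / δ ≤ |g' x - c|} with hEdef
  have hEm : MeasurableSet E := measurableSet_le measurable_const ((hg'm.sub_const c).abs)
  -- Chebyshev
  have habs' : Integrable (fun x => |g' x - c|) μ :=
    ((hlogint.congr hgg').sub (integrable_const c)).abs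
  have habsint : ∫ x, |g' x - c| ∂μ = ∫ x, |Real.log (f x) - c| ∂μ :=
    integral_congr_ae (hgg'.symm.fun_comp fun t => |t - c|)
  have hcheb : η / δ * (μ E).toReal ≤ ∫ x, |g' x - c| ∂μ :=
    mul_meas_ge_le_integral_of_nonneg (ae_of_all _ fun x => abs_nonneg _) habs' _
  have hμE : μ E < ENNReal.ofReal δ * μ Set.univ := by
    rw [measure_univ, mul_one]
    rw [ENNReal.lt_ofReal_iff_toReal_lt (measure_ne_top μ E)]
    have h2 : η / δ * (μ E).toReal < η := lt_of_le_of_lt (habsint ▸ hcheb) hosc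
    have h4 : η / δ * (μ E).toReal < η / δ * δ := by
      rw [div_mul_cancel₀ η hδ0.ne']; exact h2
    exact lt_of_mul_lt_mul_left h4 hηδ.le
  have hνE := habs E hEm hμE
  -- ν univ = I
  have hνuniv : ν Set.univ = ENNReal.ofReal I := by
    rw [hdens, withDensity_apply _ MeasurableSet.univ, Measure.restrict_univ,
      ← ofReal_integral_eq_lintegral_ofReal hfint (hfpos.mono fun x hx => hx.le)]
  -- bound ν Eᶜ
  have hcomp : ν Eᶜ ≤ ENNReal.ofReal (Real.exp (c + η / δ)) := by
    rw [hdens, withDensity_apply _ hEm.compl]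
    calc ∫⁻ x in Eᶜ, ENNReal.ofReal (f x) ∂μ
        ≤ ∫⁻ _ in Eᶜ, ENNReal.ofReal (Real.exp (c + η / δ)) ∂μ := by
          refine lintegral_mono_ae ?_
          rw [ae_restrict_iff' hEm.compl]
          filter_upwards [hfpos, hgg'] with x hx hgx hxE
          refine ENNReal.ofReal_le_ofReal ?_
          have hlt : |g' x - c| < η / δ := not_le.mp hxE
          have : Real.log (f x) ≤ c + η / δ := by
            rw [← hgx] at hlt
            have := abs_lt.mp hlt
            linarith [this.2]
          calc f x = Real.exp (Real.log (f x)) := (Real.exp_log hx).symm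
            _ ≤ Real.exp (c + η / δ) := Real.exp_le_exp.mpr this
      _ = ENNReal.ofReal (Real.exp (c + η / δ)) * μ Eᶜ := by
          rw [lintegral_const, Measure.restrict_apply MeasurableSet.univ, Set.univ_inter]
      _ ≤ ENNReal.ofReal (Real.exp (c + η / δ)) * 1 := by
          gcongr
          exact prob_le_one
      _ = ENNReal.ofReal (Real.exp (c + η / δ)) := mul_one _
  -- pass to reals
  have hνEreal : (ν E).toReal < ε * I := by
    rw [hνuniv, ← ENNReal.ofReal_mul hε0.le] at hνE
    exact ENNReal.toReal_lt_of_lt_ofReal hνE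
  have hνcompreal : (ν Eᶜ).toReal ≤ Real.exp (c + η / δ) := by
    refine le_trans (ENNReal.toReal_mono ENNReal.ofReal_ne_top hcomp) ?_
    rw [ENNReal.toReal_ofReal (Real.exp_pos _).le]
  have hsplit : (ν Set.univ).toReal = (ν E).toReal + (ν Eᶜ).toReal := by
    rw [← ENNReal.toReal_add (measure_ne_top ν E) (measure_ne_top ν Eᶜ),
      measure_add_measure_compl hEm]
  have hIeq : (ν Set.univ).toReal = I := by
    rw [hνuniv, ENNReal.toReal_ofReal hInonneg]
  have hIsum : I = (ν E).toReal + (ν Eᶜ).toReal := hIeq.symm.trans hsplit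
  have hkey : (1 - ε) * I ≤ Real.exp (c + η / δ) := by nlinarith [hνEreal, hνcompreal]
  -- conclude
  rw [le_div_iff₀ (by linarith : (0:ℝ) < 1 - ε)]
  have hexp : Real.exp (c + η / δ) * Real.exp (-c) = Real.exp (η / δ) := by
    rw [← Real.exp_add]; ring_nf
  calc I * Real.exp (-c) * (1 - ε) = ((1 - ε) * I) * Real.exp (-c) := by ring
    _ ≤ Real.exp (c + η / δ) * Real.exp (-c) :=
        mul_le_mul_of_nonneg_right hkey (Real.exp_pos _).le
    _ = Real.exp (η / δ) := hexp
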